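/- Erdős' extension of Sperner's theorem (k-Sperner): in the Boolean lattice of subsets of an n-element set, any family that is a union of at most k antichains has cardinality at most the sum of the k largest binomial coefficients C(n,i). -/

import Mathlib

open Finset

private theorem chooseMonoUp {n : ℕ} : ∀ {i j : ℕ}, i ≤ j → 2 * j ≤ n + 1 →
    n.choose i ≤ n.choose j := by
  intro i j hij
  induction j, hij using Nat.le_induction with
  | base => exact fun _ => le_rfl
  | succ j hj ih =>
    intro h2
    rcases lt_or_ge j (n / 2) with hlt | hge
    · exact (ih (by omega)).trans (Nat.choose_le_succ_of_lt_half_left hlt)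
    · have heq : n.choose (j + 1) = n.choose j := by
        rw [show j + 1 = n - j by omega, Nat.choose_symm (by omega)]
      rw [heq]; exact ih (by omega)

private theorem chooseMonoDown {n i j : ℕ} (hij : i ≤ j) (hjn : j ≤ n) (hi : n - 1 ≤ 2 * i) :
    n.choose j ≤ n.choose i := by
  rw [← Nat.choose_symm hjn, ← Nat.choose_symm (hij.trans hjn)]
  exact chooseMonoUp (by omega) (by omega)

/-- Erdős' k-Sperner theorem: a union of at most `k` antichains in the Boolean lattice of
subsets of an `n`-element set has size at most the sum of the `k` largest binomial
coefficients `C(n, i)`. -/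
theorem k_sperner (n k : ℕ) (F : Finset (Finset (Fin n)))
    (h : ∃ 𝒜 : Fin k → Finset (Finset (Fin n)),
      (∀ j, IsAntichain (· ⊆ ·) ((𝒜 j : Set (Finset (Fin n))))) ∧
      F ⊆ Finset.univ.biUnion 𝒜) :
    F.card ≤ ((Finset.range (n + 1)).powerset.filter fun t => t.card ≤ k).sup
      (fun t => ∑ i ∈ t, n.choose i) := by
  classical
  obtain ⟨𝒜, hanti, hsub⟩ := h
  by_cases hk0 : k = 0
  · subst hk0
    have hFe : F = ∅ := by
      rw [← Finset.subset_empty]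
      simpa using hsub
    simp [hFe]
  by_cases hkn : n + 1 ≤ k
  · have h1 : F.card ≤ 2 ^ n := by
      calc F.card ≤ (Finset.univ : Finset (Finset (Fin n))).card :=
            Finset.card_le_card (Finset.subset_univ F)
        _ = 2 ^ n := by simp [Finset.card_univ]
    refine h1.trans ?_
    have hmem : Finset.range (n + 1) ∈
        (Finset.range (n + 1)).powerset.filter fun t => t.card ≤ k := by
      simp only [Finset.mem_filter, Finset.mem_powerset, Finset.card_range]
      exact ⟨Finset.Subset.refl _, hkn⟩
    have h2 := Finset.le_sup (f := fun t => ∑ i ∈ t, n.choose i) hmem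
    simpa [Nat.sum_range_choose] using h2
  push_neg at hkn
  have hk1 : 1 ≤ k := Nat.one_le_iff_ne_zero.2 hk0
  have hkle : k ≤ n := by omega
  -- index set: the k middle indices
  set a := (n + 1 - k) / 2 with ha
  set b := a + k - 1 with hb
  have hbn : b ≤ n := by omega
  set t : Finset ℕ := Finset.Icc a b with ht
  have htcard : t.card = k := by rw [ht, Nat.card_Icc]; omega
  have htsub : t ⊆ Finset.range (n + 1) := by
    intro i hi
    rw [ht, Finset.mem_Icc] at hi
    rw [Finset.mem_range]; omega
  set c : ℕ := min (n.choose a) (n.choose b) with hc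
  have hclow : ∀ j ∈ t, c ≤ n.choose j := by
    intro j hj
    rw [ht, Finset.mem_Icc] at hj
    rcases le_or_gt j (n / 2) with hle | hgt
    · have h' := chooseMonoUp (n := n) hj.1 (show 2 * j ≤ n + 1 by omega)
      exact (min_le_left _ _).trans h'
    · have h' := chooseMonoDown (n := n) hj.2 hbn (show n - 1 ≤ 2 * j by omega)
      exact (min_le_right _ _).trans h'
  have hchigh : ∀ i ∈ Finset.range (n + 1), i ∉ t → n.choose i ≤ c := by
    intro i hi hit
    rw [Finset.mem_range] at hi
    rw [ht, Finset.mem_Icc, not_and_or, not_le, not_le] at hit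
    rcases hit with hlt | hgt
    · refine le_min (chooseMonoUp (n := n) (show i ≤ a by omega)
        (show 2 * a ≤ n + 1 by omega)) ?_
      rw [← Nat.choose_symm (show i ≤ n by omega)]
      exact chooseMonoDown (show b ≤ n - i by omega) (show n - i ≤ n by omega)
        (show n - 1 ≤ 2 * b by omega)
    · refine le_min ?_ (chooseMonoDown (show b ≤ i by omega) (show i ≤ n by omega)
        (show n - 1 ≤ 2 * b by omega))
      rw [← Nat.choose_symm (show i ≤ n by omega)]
      exact chooseMonoUp (show n - i ≤ a by omega) (show 2 * a ≤ n + 1 by omega)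
  -- rational setup
  have hCpos : ∀ r ∈ Finset.range (n + 1), (0 : ℚ) < (n.choose r : ℚ) := by
    intro r hr
    rw [Finset.mem_range] at hr
    exact_mod_cast Nat.choose_pos (show r ≤ n by omega)
  have hm0 : ∀ r : ℕ, (0 : ℚ) ≤ ((F # r).card : ℚ) := fun r => by positivity
  have hmC : ∀ r : ℕ, ((F # r).card : ℚ) ≤ (n.choose r : ℚ) := by
    intro r
    have h' := Set.Sized.card_le (Finset.sized_slice (𝒜 := F) (r := r))
    simp only [Fintype.card_fin] at h'
    exact_mod_cast h'
  have hrange : Finset.range (n + 1) = Finset.Iic n := by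
    ext x; simp [Nat.lt_succ_iff]
  have hFsum : ∑ r ∈ Finset.range (n + 1), (F # r).card = F.card := by
    rw [hrange]
    have h' := Finset.sum_card_slice F
    simpa using h'
  have hcardsum : (F.card : ℚ) = ∑ r ∈ Finset.range (n + 1), ((F # r).card : ℚ) := by
    rw [← hFsum, Nat.cast_sum]
  -- LYM bound
  have hLYM : ∑ r ∈ Finset.range (n + 1), ((F # r).card : ℚ) / (n.choose r : ℚ) ≤ (k : ℚ) := by
    have hslice : ∀ r : ℕ, ((F # r).card : ℚ) ≤ ∑ j : Fin k, ((Finset.slice (𝒜 j) r).card : ℚ) := by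
      intro r
      have hsub' : F # r ⊆ (Finset.univ : Finset (Fin k)).biUnion fun j => Finset.slice (𝒜 j) r := by
        intro s hs
        rw [Finset.mem_slice] at hs
        obtain ⟨j, hj1, hj2⟩ := Finset.mem_biUnion.1 (hsub hs.1)
        exact Finset.mem_biUnion.2 ⟨j, hj1, Finset.mem_slice.2 ⟨hj2, hs.2⟩⟩
      have h' := (Finset.card_le_card hsub').trans (Finset.card_biUnion_le)
      exact_mod_cast h'
    calc ∑ r ∈ Finset.range (n + 1), ((F # r).card : ℚ) / (n.choose r : ℚ)
        ≤ ∑ r ∈ Finset.range (n + 1), ∑ j : Fin k,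
            ((Finset.slice (𝒜 j) r).card : ℚ) / (n.choose r : ℚ) := by
          refine Finset.sum_le_sum fun r hr => ?_
          rw [← Finset.sum_div]
          exact div_le_div_of_nonneg_right (hslice r) (hCpos r hr).le
      _ = ∑ j : Fin k, ∑ r ∈ Finset.range (n + 1),
            ((Finset.slice (𝒜 j) r).card : ℚ) / (n.choose r : ℚ) := Finset.sum_comm
      _ ≤ ∑ _j : Fin k, (1 : ℚ) := by
          refine Finset.sum_le_sum fun j _ => ?_
          have h' := Finset.sum_card_slice_div_choose_le_one (𝕜 := ℚ) (hanti j)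
          simpa [Fintype.card_fin] using h'
      _ = (k : ℚ) := by simp
  -- knapsack step
  have h1 : ∀ r ∈ t, ((F # r).card : ℚ) ≤ ((n.choose r : ℚ) - c)
      + c * (((F # r).card : ℚ) / (n.choose r : ℚ)) := by
    intro r hr
    have hCp := hCpos r (htsub hr)
    have hcC : (c : ℚ) ≤ (n.choose r : ℚ) := by exact_mod_cast hclow r hr
    have hkey : (0 : ℚ) ≤ ((n.choose r : ℚ) - ((F # r).card : ℚ)) * ((n.choose r : ℚ) - c) :=
      mul_nonneg (by linarith [hmC r]) (by linarith)
    rw [mul_div_assoc', ← sub_le_iff_le_add', le_div_iff₀ hCp]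
    nlinarith [hkey]
  have h2 : ∀ r ∈ Finset.range (n + 1) \ t, ((F # r).card : ℚ)
      ≤ c * (((F # r).card : ℚ) / (n.choose r : ℚ)) := by
    intro r hr
    rw [Finset.mem_sdiff] at hr
    have hCp := hCpos r hr.1
    have hCc : (n.choose r : ℚ) ≤ (c : ℚ) := by exact_mod_cast hchigh r hr.1 hr.2
    rw [mul_div_assoc', le_div_iff₀ hCp]
    nlinarith [hm0 r]
  have hc0 : (0 : ℚ) ≤ (c : ℚ) := by positivity
  have hsum_div : ∑ r ∈ t, (((F # r).card : ℚ) / (n.choose r : ℚ))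
      + ∑ r ∈ Finset.range (n + 1) \ t, (((F # r).card : ℚ) / (n.choose r : ℚ))
      = ∑ r ∈ Finset.range (n + 1), (((F # r).card : ℚ) / (n.choose r : ℚ)) := by
    rw [add_comm]; exact Finset.sum_sdiff htsub
  have hsum_m : ∑ r ∈ t, ((F # r).card : ℚ)
      + ∑ r ∈ Finset.range (n + 1) \ t, ((F # r).card : ℚ)
      = ∑ r ∈ Finset.range (n + 1), ((F # r).card : ℚ) := by
    rw [add_comm]; exact Finset.sum_sdiff htsub
  have hA : ∑ r ∈ t, ((F # r).card : ℚ) ≤ (∑ r ∈ t, (n.choose r : ℚ) - k * c)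
      + c * ∑ r ∈ t, (((F # r).card : ℚ) / (n.choose r : ℚ)) := by
    have h' := Finset.sum_le_sum h1
    rw [Finset.sum_add_distrib, Finset.sum_sub_distrib, Finset.sum_const, htcard,
      ← Finset.mul_sum] at h'
    convert h' using 2
    case e'_2 => rfl
    push_cast
    ring
  have hB : ∑ r ∈ Finset.range (n + 1) \ t, ((F # r).card : ℚ)
      ≤ c * ∑ r ∈ Finset.range (n + 1) \ t, (((F # r).card : ℚ) / (n.choose r : ℚ)) := by
    rw [Finset.mul_sum]; exact Finset.sum_le_sum h2
  have hcc : (c : ℚ) * ∑ r ∈ Finset.range (n + 1), (((F # r).card : ℚ) / (n.choose r : ℚ))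
      ≤ c * k := mul_le_mul_of_nonneg_left hLYM hc0
  have key : (F.card : ℚ) ≤ ∑ r ∈ t, (n.choose r : ℚ) := by
    rw [hcardsum, ← hsum_m]
    nlinarith [hA, hB, hcc, hsum_div]
  have keyN : F.card ≤ ∑ r ∈ t, n.choose r := by
    have h' : (F.card : ℚ) ≤ ((∑ r ∈ t, n.choose r : ℕ) : ℚ) := by
      rw [Nat.cast_sum]; exact key
    exact_mod_cast h'
  refine keyN.trans (Finset.le_sup (f := fun t => ∑ i ∈ t, n.choose i) ?_)
  rw [Finset.mem_filter, Finset.mem_powerset]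
  exact ⟨htsub, htcard.le⟩
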